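/- Let p, k ∈ ℂ with p ≠ 0, and let a ∈ ℂ[X] be a polynomial such that (p·μ − (k+p)·λ)·a(λ+μ) = p·μ·a(μ) for all λ, μ ∈ ℂ. If k + p ≠ 0 then a = 0. If k + p = 0 then a is a constant polynomial. -/

import Mathlib

/-- Let `p, k ∈ ℂ` with `p ≠ 0`, and let `a ∈ ℂ[X]` be a polynomial such that
`(p·μ − (k+p)·λ)·a(λ+μ) = p·μ·a(μ)` for all `λ, μ ∈ ℂ`. If `k + p ≠ 0` then `a = 0`.
If `k + p = 0` then `a` is a constant polynomial. -/
theorem functional_equation_rank_one (p k : ℂ) (hp : p ≠ 0) (a : Polynomial ℂ)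
    (ha : ∀ l m : ℂ, (p * m - (k + p) * l) * a.eval (l + m) = p * m * a.eval m) :
    (k + p ≠ 0 → a = 0) ∧ (k + p = 0 → ∃ c : ℂ, a = Polynomial.C c) := by
  constructor
  · intro hkp
    apply Polynomial.eq_zero_of_infinite_isRoot
    apply Set.Infinite.mono (s := {x : ℂ | x ≠ 0})
    · intro x hx
      have h := ha x 0
      simp only [mul_zero, zero_sub, add_zero, zero_mul] at h
      have := mul_eq_zero.mp h
      rcases this with h1 | h1
      · rw [neg_eq_zero, mul_eq_zero] at h1
        exact absurd h1 (by push_neg; exact ⟨hkp, hx⟩)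
      · exact h1
    · exact (Set.finite_singleton (0 : ℂ)).infinite_compl
  · intro hkp
    refine ⟨a.eval 0, Polynomial.funext fun x => ?_⟩
    have h := ha (x - 1) 1
    rw [hkp, zero_mul, sub_zero, sub_add_cancel] at h
    have h2 := ha (-1) 1
    rw [hkp, zero_mul, sub_zero, neg_add_cancel] at h2
    have := mul_left_cancel₀ (by simpa using hp) (h.trans h2.symm)
    simpa using this
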